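/- Let φ₁, φ₂ ∈ L²(π). Then ‖Tφ₁ − Tφ₂‖_π ≤ α ‖φ₁ − φ₂‖_π; that is, the Bellman operator T is an α-contraction on L²(π) with respect to the L²-norm induced by the invariant measure π. -/

import Mathlib

open MeasureTheory ProbabilityTheory ENNReal

/-- Jensen / Cauchy–Schwarz for a probability measure:
`(∫ ψ)² ≤ ∫ ψ²` in `ℝ≥0∞` form. -/
lemma jensen_sq_aux {𝒳 : Type*} [MeasurableSpace 𝒳] (μ : Measure 𝒳) [IsProbabilityMeasure μ]
    (ψ : 𝒳 → ℝ) (hψ : Measurable ψ) :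
    ENNReal.ofReal ((∫ y, ψ y ∂μ) ^ 2) ≤ ∫⁻ y, ENNReal.ofReal (ψ y ^ 2) ∂μ := by
  have hofReal : ∀ t : ℝ, ENNReal.ofReal (t ^ 2) = (‖t‖₊ : ℝ≥0∞) ^ 2 := by
    intro t
    rw [← sq_abs, ENNReal.ofReal_pow (abs_nonneg t), ← Real.norm_eq_abs,
      ofReal_norm]
    rfl
  rw [hofReal]
  simp_rw [hofReal]
  calc (‖∫ y, ψ y ∂μ‖₊ : ℝ≥0∞) ^ 2
      ≤ (∫⁻ y, (‖ψ y‖₊ : ℝ≥0∞) ∂μ) ^ 2 := by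
        gcongr
        exact enorm_integral_le_lintegral_enorm _
    _ ≤ ∫⁻ y, (‖ψ y‖₊ : ℝ≥0∞) ^ 2 ∂μ := by
        have hCS := ENNReal.lintegral_mul_le_Lp_mul_Lq μ
          (p := 2) (q := 2) (by constructor <;> norm_num)
          (f := fun y => (‖ψ y‖₊ : ℝ≥0∞)) (g := fun _ => 1)
          hψ.enorm.aemeasurable aemeasurable_const
        simp only [mul_one, Pi.mul_apply, ENNReal.one_rpow, lintegral_one,
          measure_univ, ENNReal.one_rpow] at hCS
        calc (∫⁻ y, (‖ψ y‖₊ : ℝ≥0∞) ∂μ) ^ 2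
            ≤ ((∫⁻ y, (‖ψ y‖₊ : ℝ≥0∞) ^ (2:ℝ) ∂μ) ^ (1 / (2:ℝ))) ^ 2 := by
              gcongr
          _ = ∫⁻ y, (‖ψ y‖₊ : ℝ≥0∞) ^ 2 ∂μ := by
              rw [← ENNReal.rpow_natCast (_ ^ (1/(2:ℝ))) 2, ← ENNReal.rpow_mul]
              norm_num

/-- The Bellman operator `T φ x = r x + α ∫ φ(y) κ(x, dy)` is an `α`-contraction on
`L²(π)` when `π` is invariant under the Markov kernel `κ`. -/
theorem bellman_operator_contraction
    {𝒳 : Type*} [MeasurableSpace 𝒳]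
    (κ : Kernel 𝒳 𝒳) [IsMarkovKernel κ]
    (π : Measure 𝒳) [IsProbabilityMeasure π]
    (hinv : ∀ B : Set 𝒳, MeasurableSet B → π B = ∫⁻ x, κ x B ∂π)
    (α : ℝ) (hα0 : 0 < α) (hα1 : α < 1)
    (r : 𝒳 → ℝ) (hr : Measurable r)
    (hr2 : Integrable (fun x => r x ^ 2) π)
    (φ₁ φ₂ : 𝒳 → ℝ) (hφ₁ : Measurable φ₁) (hφ₂ : Measurable φ₂)
    (hφ₁2 : Integrable (fun x => φ₁ x ^ 2) π)
    (hφ₂2 : Integrable (fun x => φ₂ x ^ 2) π) :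
    Real.sqrt (∫ x, ((r x + α * ∫ y, φ₁ y ∂(κ x)) - (r x + α * ∫ y, φ₂ y ∂(κ x))) ^ 2 ∂π)
      ≤ α * Real.sqrt (∫ x, (φ₁ x - φ₂ x) ^ 2 ∂π) := by
  set ψ : 𝒳 → ℝ := fun x => φ₁ x - φ₂ x with hψdef
  have hψ : Measurable ψ := hφ₁.sub hφ₂
  -- invariance of π under κ, as a bind equality
  have hbind : Measure.bind π (fun x => κ x) = π := by
    ext B hB
    rw [Measure.bind_apply hB κ.measurable.aemeasurable, hinv B hB]
  have linv : ∀ f : 𝒳 → ℝ≥0∞, Measurable f →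
      ∫⁻ x, ∫⁻ y, f y ∂(κ x) ∂π = ∫⁻ y, f y ∂π := by
    intro f hf
    conv_rhs => rw [← hbind]
    rw [Measure.lintegral_bind κ.measurable.aemeasurable hf.aemeasurable]
  -- a.e. integrability w.r.t. κ x of any π-square-integrable function
  have key : ∀ φ : 𝒳 → ℝ, Measurable φ → Integrable (fun x => φ x ^ 2) π →
      ∀ᵐ x ∂π, Integrable φ (κ x) := by
    intro φ hφ h2
    have hmeas : Measurable fun y => ENNReal.ofReal (φ y ^ 2) :=
      (hφ.pow_const 2).ennreal_ofReal
    have heq : ∫⁻ y, ENNReal.ofReal (φ y ^ 2) ∂π < ⊤ := by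
      have h := h2.2
      rw [HasFiniteIntegral] at h
      refine lt_of_eq_of_lt ?_ h
      congr 1
      ext y
      rw [← Real.enorm_eq_ofReal (sq_nonneg (φ y))]
    have hfin : ∫⁻ x, ∫⁻ y, ENNReal.ofReal (φ y ^ 2) ∂(κ x) ∂π < ⊤ := by
      rw [linv _ hmeas]; exact heq
    have hae : ∀ᵐ x ∂π, ∫⁻ y, ENNReal.ofReal (φ y ^ 2) ∂(κ x) < ⊤ :=
      ae_lt_top (Measurable.lintegral_kernel hmeas) hfin.ne
    filter_upwards [hae] with x hx
    have hsq : Integrable (fun y => φ y ^ 2) (κ x) := by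
      refine ⟨(hφ.pow_const 2).aestronglyMeasurable, ?_⟩
      rw [HasFiniteIntegral]
      refine lt_of_eq_of_lt ?_ hx
      congr 1
      ext y
      rw [← Real.enorm_eq_ofReal (sq_nonneg (φ y))]
    refine Integrable.mono' ((integrable_const 1).add hsq) hφ.aestronglyMeasurable ?_
    filter_upwards with y
    rw [Real.norm_eq_abs]
    simp only [Pi.add_apply]
    nlinarith [sq_nonneg (|φ y| - 1), sq_abs (φ y), abs_nonneg (φ y)]
  have hint₁ := key φ₁ hφ₁ hφ₁2
  have hint₂ := key φ₂ hφ₂ hφ₂2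
  -- measurability of the integral functions
  have hA : StronglyMeasurable fun x => ∫ y, φ₁ y ∂(κ x) :=
    (hφ₁.stronglyMeasurable.comp_measurable measurable_snd).integral_kernel_prod_right'
  have hB : StronglyMeasurable fun x => ∫ y, φ₂ y ∂(κ x) :=
    (hφ₂.stronglyMeasurable.comp_measurable measurable_snd).integral_kernel_prod_right'
  set F : 𝒳 → ℝ := fun x => α * ((∫ y, φ₁ y ∂(κ x)) - ∫ y, φ₂ y ∂(κ x)) with hFdef
  have hFmeas : AEStronglyMeasurable (fun x => F x ^ 2) π :=
    ((stronglyMeasurable_const.mul (hA.sub hB)).pow 2).aestronglyMeasurable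
  -- integrability of ψ²
  have hψ2 : Integrable (fun x => ψ x ^ 2) π := by
    refine Integrable.mono' ((hφ₁2.add hφ₂2).const_mul 2)
      ((hψ.pow_const 2).aestronglyMeasurable) ?_
    filter_upwards with x
    rw [Real.norm_eq_abs, abs_of_nonneg (sq_nonneg _)]
    simp only [ψ, Pi.add_apply]
    nlinarith [sq_nonneg (φ₁ x + φ₂ x)]
  have hψmeas : Measurable fun y => ENNReal.ofReal (ψ y ^ 2) :=
    (hψ.pow_const 2).ennreal_ofReal
  have hψfin : ∫⁻ y, ENNReal.ofReal (ψ y ^ 2) ∂π < ⊤ := by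
    have h := hψ2.2
    rw [HasFiniteIntegral] at h
    refine lt_of_eq_of_lt ?_ h
    congr 1
    ext y
    rw [← Real.enorm_eq_ofReal (sq_nonneg (ψ y))]
  -- rewrite the LHS integrand
  have hrw : (fun x => ((r x + α * ∫ y, φ₁ y ∂(κ x)) - (r x + α * ∫ y, φ₂ y ∂(κ x))) ^ 2)
      = fun x => F x ^ 2 := by
    funext x; simp only [F]; ring
  rw [hrw]
  -- the key integral bound
  have hle : ∫ x, F x ^ 2 ∂π ≤ α ^ 2 * ∫ x, ψ x ^ 2 ∂π := by
    rw [integral_eq_lintegral_of_nonneg_ae (Filter.Eventually.of_forall fun x => sq_nonneg _)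
      hFmeas,
      integral_eq_lintegral_of_nonneg_ae (Filter.Eventually.of_forall fun x => sq_nonneg _)
      ((hψ.pow_const 2).aestronglyMeasurable)]
    have hbound : ∫⁻ x, ENNReal.ofReal (F x ^ 2) ∂π
        ≤ ENNReal.ofReal (α ^ 2) * ∫⁻ y, ENNReal.ofReal (ψ y ^ 2) ∂π := by
      rw [← linv _ hψmeas, ← lintegral_const_mul _ (Measurable.lintegral_kernel hψmeas)]
      refine lintegral_mono_ae ?_
      filter_upwards [hint₁, hint₂] with x h1 h2
      have hFx : F x = α * ∫ y, ψ y ∂(κ x) := by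
        rw [hFdef]
        simp only [ψ]
        rw [integral_sub h1 h2]
      rw [hFx, mul_pow, ENNReal.ofReal_mul (sq_nonneg α)]
      gcongr
      exact jensen_sq_aux (κ x) ψ hψ
    have hfin2 : ENNReal.ofReal (α ^ 2) * ∫⁻ y, ENNReal.ofReal (ψ y ^ 2) ∂π ≠ ⊤ :=
      ENNReal.mul_ne_top ENNReal.ofReal_ne_top hψfin.ne
    calc (∫⁻ x, ENNReal.ofReal (F x ^ 2) ∂π).toReal
        ≤ (ENNReal.ofReal (α ^ 2) * ∫⁻ y, ENNReal.ofReal (ψ y ^ 2) ∂π).toReal :=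
          ENNReal.toReal_mono hfin2 hbound
      _ = α ^ 2 * (∫⁻ y, ENNReal.ofReal (ψ y ^ 2) ∂π).toReal := by
          rw [ENNReal.toReal_mul, ENNReal.toReal_ofReal (sq_nonneg α)]
  calc Real.sqrt (∫ x, F x ^ 2 ∂π)
      ≤ Real.sqrt (α ^ 2 * ∫ x, ψ x ^ 2 ∂π) := Real.sqrt_le_sqrt hle
    _ = α * Real.sqrt (∫ x, ψ x ^ 2 ∂π) := by
        rw [Real.sqrt_mul (sq_nonneg α), Real.sqrt_sq hα0.le]
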